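/- Let a < b, L > 0, and let f : ℝ → ℝ be an L-Lipschitz function that is constant on (−∞, a] and constant on [b, ∞). Then for every ε > 0 there exist an integer m ≤ ⌈L(b−a)/ε⌉ + 1 and real numbers c, a₁, …, a_m, t₁, …, t_m such that sup_{x ∈ ℝ} | f(x) − ( c + Σ_{i=1}^m a_i · max(0, x − t_i) ) | ≤ ε; that is, f is approximated to uniform error ε by a two-layer ReLU network with at most ⌈L(b−a)/ε⌉ + 1 hidden units. -/

import Mathlib

open Finset

/-- Abel summation / telescoping for the ReLU coefficients. -/
private lemma abel_sum (s r : ℕ → ℝ) (n : ℕ) :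
    ∑ i ∈ Finset.range (n + 1), (s i - (if i = 0 then 0 else s (i - 1))) * r i
      = ∑ i ∈ Finset.range n, s i * (r i - r (i + 1)) + s n * r n := by
  induction n with
  | zero => simp
  | succ n ih =>
    rw [Finset.sum_range_succ, ih, Finset.sum_range_succ]
    simp only [Nat.succ_ne_zero, if_false, Nat.add_sub_cancel]
    ring

set_option maxHeartbeats 1000000 in
/-- Lipschitz function approximation: an `L`-Lipschitz function `f : ℝ → ℝ` that is
constant on `(−∞, a]` and on `[b, ∞)` can be uniformly approximated within `ε` by a
two-layer ReLU network `x ↦ c + Σ_{i=1}^m aᵢ · max(0, x − tᵢ)` with at most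
`⌈L(b−a)/ε⌉ + 1` hidden units. -/
theorem lipschitz_relu_approx (a b L : ℝ) (hab : a < b) (hL : 0 < L)
    (f : ℝ → ℝ) (hf : ∀ x y : ℝ, |f x - f y| ≤ L * |x - y|)
    (ca cb : ℝ) (hca : ∀ x : ℝ, x ≤ a → f x = ca) (hcb : ∀ x : ℝ, b ≤ x → f x = cb)
    (ε : ℝ) (hε : 0 < ε) :
    ∃ (m : ℕ) (c : ℝ) (A T : Fin m → ℝ),
      m ≤ ⌈L * (b - a) / ε⌉₊ + 1 ∧
      ∀ x : ℝ, |f x - (c + ∑ i, A i * max 0 (x - T i))| ≤ ε := by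
  have hba : 0 < b - a := sub_pos.mpr hab
  have hpos : 0 < L * (b - a) / ε := by positivity
  set N := ⌈L * (b - a) / ε⌉₊ with hN_def
  have hN : 0 < N := Nat.ceil_pos.mpr hpos
  have hNR : (0 : ℝ) < (N : ℝ) := by exact_mod_cast hN
  set h := (b - a) / N with hh_def
  have hh : 0 < h := by positivity
  have hNh : (N : ℝ) * h = b - a := by
    rw [hh_def]; field_simp
  have hLh : L * h ≤ ε := by
    have h1 : L * (b - a) / ε ≤ (N : ℝ) := Nat.le_ceil _
    rw [div_le_iff₀ hε] at h1
    rw [hh_def, mul_div_assoc' L (b - a) (N : ℝ), div_le_iff₀ hNR]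
    linarith
  -- knots
  set T : ℕ → ℝ := fun i => a + i * h with hT_def
  have hTmono : ∀ i j : ℕ, i ≤ j → T i ≤ T j := by
    intro i j hij
    have : (i : ℝ) ≤ j := by exact_mod_cast hij
    simp only [hT_def]
    nlinarith
  have hTstep : ∀ i : ℕ, T (i + 1) - T i = h := by
    intro i; simp only [hT_def]; push_cast; ring
  have hT0 : T 0 = a := by simp [hT_def]
  have hTN : T N = b := by simp only [hT_def]; linarith [hNh]
  -- slopes
  set s : ℕ → ℝ := fun i => if i < N then (f (T (i + 1)) - f (T i)) / h else 0 with hs_def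
  refine ⟨N + 1, ca,
    fun i => s (i : ℕ) - (if (i : ℕ) = 0 then 0 else s ((i : ℕ) - 1)),
    fun i => T (i : ℕ), le_refl _, ?_⟩
  intro x
  -- rewrite the network sum via Abel summation
  have hmaxmin : ∀ t : ℝ, max 0 (x - t) = x - min x t := by
    intro t
    rcases le_total x t with hxt | hxt
    · rw [min_eq_left hxt, max_eq_left (by linarith), sub_self]
    · rw [min_eq_right hxt, max_eq_right (by linarith)]
  have hnet : (∑ i : Fin (N + 1),
        (s (i : ℕ) - (if (i : ℕ) = 0 then 0 else s ((i : ℕ) - 1))) * max 0 (x - T (i : ℕ)))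
      = ∑ i ∈ Finset.range N, s i * (min x (T (i + 1)) - min x (T i)) := by
    rw [Fin.sum_univ_eq_sum_range
      (fun j => (s j - (if j = 0 then 0 else s (j - 1))) * max 0 (x - T j)) (N + 1)]
    rw [abel_sum s (fun j => max 0 (x - T j)) N]
    have hsN : s N = 0 := by simp [hs_def]
    rw [hsN, zero_mul, add_zero]
    refine Finset.sum_congr rfl fun i _ => ?_
    rw [hmaxmin, hmaxmin]; ring
  -- telescoping for f x
  have hfx : f x = ca + ∑ i ∈ Finset.range N, (f (min x (T (i + 1))) - f (min x (T i))) := by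
    rw [Finset.sum_range_sub (fun i => f (min x (T i)))]
    have h1 : f (min x (T 0)) = ca := by
      apply hca; rw [hT0]; exact min_le_right _ _
    have h2 : f (min x (T N)) = f x := by
      rw [hTN]
      rcases le_total x b with hx | hx
      · rw [min_eq_left hx]
      · rw [min_eq_right hx, hcb b le_rfl, hcb x hx]
    rw [h1, h2]; ring
  rw [hnet, hfx]
  have hsum : ca + ∑ i ∈ Finset.range N, (f (min x (T (i + 1))) - f (min x (T i)))
      - (ca + ∑ i ∈ Finset.range N, s i * (min x (T (i + 1)) - min x (T i)))
      = ∑ i ∈ Finset.range N,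
        ((f (min x (T (i + 1))) - f (min x (T i))) - s i * (min x (T (i + 1)) - min x (T i))) := by
    simp only [Finset.sum_sub_distrib]; ring
  rw [hsum]
  set term : ℕ → ℝ := fun i =>
    (f (min x (T (i + 1))) - f (min x (T i))) - s i * (min x (T (i + 1)) - min x (T i))
    with hterm_def
  -- vanishing lemmas
  have hzero1 : ∀ i : ℕ, x ≤ T i → term i = 0 := by
    intro i hxi
    have h1 : min x (T i) = x := min_eq_left hxi
    have h2 : min x (T (i + 1)) = x :=
      min_eq_left (le_trans hxi (hTmono i (i + 1) (Nat.le_succ i)))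
    simp [hterm_def, h1, h2]
  have hzero2 : ∀ i : ℕ, i < N → T (i + 1) ≤ x → term i = 0 := by
    intro i hiN hxi
    have h1 : min x (T i) = T i :=
      min_eq_right (le_trans (hTmono i (i + 1) (Nat.le_succ i)) hxi)
    have h2 : min x (T (i + 1)) = T (i + 1) := min_eq_right hxi
    have hsi : s i = (f (T (i + 1)) - f (T i)) / h := by simp [hs_def, hiN]
    simp only [hterm_def, h1, h2, hsi]
    rw [hTstep i]
    field_simp
    ring
  -- find the special index k
  obtain ⟨k, hk⟩ : ∃ k : ℕ, ∀ i ∈ Finset.range N, |term i| ≤ if i = k then ε else 0 := by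
    rcases le_or_gt x a with hxa | hxa
    · refine ⟨N, fun k hi => ?_⟩
      have hiN := Finset.mem_range.mp hi
      have : term k = 0 := hzero1 k (le_trans hxa (by rw [← hT0]; exact hTmono 0 k (Nat.zero_le k)))
      rw [this, abs_zero]
      split <;> [exact le_of_lt hε; exact le_rfl]
    rcases le_or_gt b x with hbx | hbx
    · refine ⟨N, fun k hi => ?_⟩
      have hiN := Finset.mem_range.mp hi
      have : term k = 0 := by
        apply hzero2 k hiN
        exact le_trans (by rw [← hTN]; exact hTmono (k + 1) N hiN) hbx
      rw [this, abs_zero]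
      split <;> [exact le_of_lt hε; exact le_rfl]
    -- a < x < b
    · set k := ⌊(x - a) / h⌋₊ with hk_def
      have hxanneg : 0 ≤ (x - a) / h := div_nonneg (by linarith) (le_of_lt hh)
      have hkle : (k : ℝ) ≤ (x - a) / h := Nat.floor_le hxanneg
      have hklt : (x - a) / h < (k : ℝ) + 1 := Nat.lt_floor_add_one _
      have hTkx : T k ≤ x := by
        have : (k : ℝ) * h ≤ x - a := by
          rw [← le_div_iff₀ hh] at *; exact hkle
        simp only [hT_def]; linarith
      have hxTk1 : x < T (k + 1) := by
        have : x - a < ((k : ℝ) + 1) * h := by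
          rw [← div_lt_iff₀ hh]; exact hklt
        simp only [hT_def]; push_cast; linarith
      have hkN : k < N := by
        have h2 : (x - a) / h < (N : ℝ) := by
          rw [div_lt_iff₀ hh]; linarith [hNh]
        have : (k : ℝ) < (N : ℝ) := lt_of_le_of_lt hkle h2
        exact_mod_cast this
      refine ⟨k, fun i hi => ?_⟩
      have hiN := Finset.mem_range.mp hi
      rcases lt_trichotomy i k with hik | hik | hik
      · have : term i = 0 := hzero2 i hiN (le_trans (hTmono (i + 1) k hik) hTkx)
        rw [this, abs_zero, if_neg (Nat.ne_of_lt hik)]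
      · subst hik
        rw [if_pos rfl]
        have h1 : min x (T k) = T k := min_eq_right hTkx
        have h2 : min x (T (k + 1)) = x := min_eq_left (le_of_lt hxTk1)
        have hsi : s k = (f (T (k + 1)) - f (T k)) / h := by simp [hs_def, hiN]
        set w := (x - T k) / h with hw_def
        have hw0 : 0 ≤ w := by
          apply div_nonneg (by linarith) (le_of_lt hh)
        have hw1 : w ≤ 1 := by
          rw [hw_def, div_le_one hh]
          have := hTstep k; linarith
        have hkey : term k = (1 - w) * (f x - f (T k)) + w * (f x - f (T (k + 1))) := by
          simp only [hterm_def, h1, h2, hsi, hw_def]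
          field_simp
          ring
        have hstep := hTstep k
        have hb1 : |f x - f (T k)| ≤ L * h := by
          calc |f x - f (T k)| ≤ L * |x - T k| := hf x (T k)
            _ ≤ L * h := by
                rw [abs_of_nonneg (by linarith)]
                exact mul_le_mul_of_nonneg_left (by linarith) (le_of_lt hL)
        have hb2 : |f x - f (T (k + 1))| ≤ L * h := by
          calc |f x - f (T (k + 1))| ≤ L * |x - T (k + 1)| := hf x (T (k + 1))
            _ ≤ L * h := by
                rw [abs_of_nonpos (by linarith)]
                exact mul_le_mul_of_nonneg_left (by linarith) (le_of_lt hL)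
        calc |term k| = |(1 - w) * (f x - f (T k)) + w * (f x - f (T (k + 1)))| := by rw [hkey]
          _ ≤ |(1 - w) * (f x - f (T k))| + |w * (f x - f (T (k + 1)))| := abs_add_le _ _
          _ = (1 - w) * |f x - f (T k)| + w * |f x - f (T (k + 1))| := by
              rw [abs_mul, abs_mul, abs_of_nonneg (by linarith), abs_of_nonneg hw0]
          _ ≤ (1 - w) * (L * h) + w * (L * h) := by
              apply add_le_add
              · exact mul_le_mul_of_nonneg_left hb1 (by linarith)
              · exact mul_le_mul_of_nonneg_left hb2 hw0
          _ = L * h := by ring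
          _ ≤ ε := hLh
      · have : term i = 0 := hzero1 i (le_trans (le_of_lt hxTk1) (hTmono (k + 1) i hik))
        rw [this, abs_zero, if_neg (Nat.ne_of_gt hik)]
  calc |∑ i ∈ Finset.range N, term i| ≤ ∑ i ∈ Finset.range N, |term i| :=
        Finset.abs_sum_le_sum_abs _ _
    _ ≤ ∑ i ∈ Finset.range N, (if i = k then ε else 0) := Finset.sum_le_sum hk
    _ ≤ ε := by
        rw [Finset.sum_ite_eq' (Finset.range N) k (fun _ => ε)]
        split <;> [exact le_rfl; exact le_of_lt hε]
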